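/- Let v : ℝ² → ℝ be twice continuously differentiable with Δv + 4v = 0 on ℝ², and let μ : (a,b) → ℝ be a continuously differentiable function on an open interval (a,b) such that v(μ(y), y) = 0 for all y ∈ (a,b). Define u(x,y) := ∫_{μ(y)}^{x} v(t,y) dt for x ∈ ℝ and y ∈ (a,b). Then Δu(x,y) + 4·u(x,y) + h(y) = 0 for all x ∈ ℝ and y ∈ (a,b), where h(y) := (∂v/∂y)(μ(y), y)·μ′(y) − (∂v/∂x)(μ(y), y). -/

import Mathlib

open Real

open MeasureTheory intervalIntegral Asymptotics Filter Metric


private lemma pd_fst {w : ℝ × ℝ → ℝ} (hw : Differentiable ℝ w) (t s : ℝ) :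
    HasDerivAt (fun r => w (r, s)) (fderiv ℝ w (t, s) (1, 0)) t :=
  (hw (t, s)).hasFDerivAt.comp_hasDerivAt t
    (HasDerivAt.prodMk (hasDerivAt_id t) (hasDerivAt_const t s))

private lemma pd_snd {w : ℝ × ℝ → ℝ} (hw : Differentiable ℝ w) (t s : ℝ) :
    HasDerivAt (fun r => w (t, r)) (fderiv ℝ w (t, s) (0, 1)) s :=
  (hw (t, s)).hasFDerivAt.comp_hasDerivAt s
    (HasDerivAt.prodMk (hasDerivAt_const s t) (hasDerivAt_id s))

private lemma cont_pd {w : ℝ × ℝ → ℝ} (hw : ContDiff ℝ 1 w) (e : ℝ × ℝ) :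
    Continuous fun p => fderiv ℝ w p e :=
  (ContinuousLinearMap.apply ℝ ℝ e).continuous.comp (hw.continuous_fderiv one_ne_zero)

private lemma cont_slice {w : ℝ × ℝ → ℝ} (hw : Continuous w) (s : ℝ) :
    Continuous fun t => w (t, s) :=
  hw.comp (continuous_id.prodMk continuous_const)

private lemma key {w : ℝ × ℝ → ℝ} (hw : ContDiff ℝ 1 w) {μ : ℝ → ℝ} (x y μ' : ℝ)
    (hμ : HasDerivAt μ μ' y) :
    HasDerivAt (fun s => ∫ t in μ s..x, w (t, s))
      ((∫ t in μ y..x, fderiv ℝ w (t, y) (0, 1)) - w (μ y, y) * μ') y := by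
  have hwc : Continuous w := hw.continuous
  have hwd : Differentiable ℝ w := hw.differentiable one_ne_zero
  have hw₂c : Continuous fun p => fderiv ℝ w p (0, 1) := cont_pd hw _
  have hint : ∀ c d s : ℝ, IntervalIntegrable (fun t => w (t, s)) volume c d :=
    fun c d s => (cont_slice hwc s).intervalIntegrable c d
  -- Part 1 : fixed endpoints, moving parameter
  obtain ⟨C, hC⟩ := (isCompact_uIcc.prod isCompact_Icc).exists_bound_of_continuousOn
      (s := Set.uIcc (μ y) x ×ˢ Set.Icc (y - 1) (y + 1)) hw₂c.continuousOn
  have P1 : HasDerivAt (fun s => ∫ t in μ y..x, w (t, s))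
      (∫ t in μ y..x, fderiv ℝ w (t, y) (0, 1)) y := by
    refine (intervalIntegral.hasDerivAt_integral_of_dominated_loc_of_deriv_le
      (F := fun s t => w (t, s)) (F' := fun s t => fderiv ℝ w (t, s) (0, 1))
      (bound := fun _ => C) (ball_mem_nhds y one_pos)
      (Eventually.of_forall fun s => ((cont_slice hwc s).aestronglyMeasurable).restrict)
      (hint _ _ _)
      (((hw₂c.comp (continuous_id.prodMk continuous_const)).aestronglyMeasurable).restrict)
      (Eventually.of_forall fun t ht => fun s hs => ?_)
      (intervalIntegrable_const)
      (Eventually.of_forall fun t _ => fun s _ => pd_snd hwd t s)).2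
    refine hC (t, s) ⟨Set.uIoc_subset_uIcc ht, ?_⟩
    rw [mem_ball, Real.dist_eq] at hs
    constructor <;> [linarith [abs_sub_lt_iff.mp hs]; linarith [abs_sub_lt_iff.mp hs]]
  -- Part 2 : moving endpoint
  have hA : HasDerivAt (fun s => ∫ t in μ y..μ s, w (t, y)) (w (μ y, y) * μ') y := by
    have hg : HasDerivAt (fun r => ∫ t in μ y..r, w (t, y)) (w (μ y, y)) (μ y) :=
      intervalIntegral.integral_hasDerivAt_right (hint _ _ _)
        ((cont_slice hwc y).stronglyMeasurableAtFilter _ _)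
        (cont_slice hwc y).continuousAt
    exact hg.comp y hμ
  have hB : HasDerivAt (fun s => ∫ t in μ y..μ s, (w (t, s) - w (t, y))) 0 y := by
    obtain ⟨K, U, hU, hlip⟩ := (hw.contDiffAt (x := (μ y, y))).exists_lipschitzOnWith
    obtain ⟨ε, hε, hball⟩ := Metric.mem_nhds_iff.mp hU
    rw [hasDerivAt_iff_isLittleO]
    simp only [intervalIntegral.integral_same, sub_zero, smul_zero]
    have hO : (fun s => μ s - μ y) =O[nhds y] fun s => s - y := hμ.isBigO_sub
    obtain ⟨M, hM⟩ := hO.isBigOWith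
    refine IsBigO.trans_isLittleO (g := fun s => (s - y) * (μ s - μ y)) ?_ ?_
    · rw [isBigO_iff]
      refine ⟨K, ?_⟩
      have h1 : ∀ᶠ s in nhds y, |s - y| < ε / 2 := by
        have : Continuous fun s : ℝ => |s - y| := (continuous_id.sub continuous_const).abs
        have := this.continuousAt (x := y)
        simp only [ContinuousAt, sub_self, abs_zero] at this
        exact this (Iio_mem_nhds (by positivity))
      have h2 : ∀ᶠ s in nhds y, |μ s - μ y| < ε / 2 := by
        have hc : ContinuousAt μ y := hμ.continuousAt
        have : ContinuousAt (fun s => |μ s - μ y|) y :=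
          ((hc.sub continuousAt_const).abs)
        simp only [ContinuousAt, sub_self, abs_zero] at this
        exact this (Iio_mem_nhds (by positivity))
      filter_upwards [h1, h2] with s hs1 hs2
      have hbound : ∀ t ∈ Set.uIoc (μ y) (μ s), ‖w (t, s) - w (t, y)‖ ≤ K * |s - y| := by
        intro t ht
        have htm : t ∈ Set.uIcc (μ y) (μ s) := Set.uIoc_subset_uIcc ht
        have ht1 : |t - μ y| ≤ |μ s - μ y| := Set.abs_sub_left_of_mem_uIcc htm
        have hts : (t, s) ∈ U := by
          apply hball
          rw [mem_ball, Prod.dist_eq, Real.dist_eq, Real.dist_eq]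
          exact max_lt (by linarith) (by linarith)
        have hty : (t, y) ∈ U := by
          apply hball
          rw [mem_ball, Prod.dist_eq, Real.dist_eq, Real.dist_eq]
          simp only [sub_self, abs_zero]
          exact max_lt (by linarith) hε
        have := hlip.dist_le_mul (t, s) hts (t, y) hty
        rw [Prod.dist_eq, Real.dist_eq, Real.dist_eq, Real.dist_eq] at this
        simpa [abs_nonneg] using this.trans_eq (by
          rw [max_eq_right] <;> simp [abs_nonneg])
      have := intervalIntegral.norm_integral_le_of_norm_le_const hbound
      calc ‖∫ t in μ y..μ s, (w (t, s) - w (t, y))‖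
          ≤ K * |s - y| * |μ s - μ y| := this
        _ = K * ‖(s - y) * (μ s - μ y)‖ := by rw [norm_mul]; simp [Real.norm_eq_abs]; ring
    · have h1 : (fun s : ℝ => s - y) =o[nhds y] (fun _ => (1 : ℝ)) := by
        rw [isLittleO_one_iff]
        have : Tendsto (fun s : ℝ => s - y) (nhds y) (nhds (y - y)) :=
          (continuous_id.sub continuous_const).continuousAt
        simpa using this
      have := h1.mul_isBigO hO
      simpa using this
  have P2 : HasDerivAt (fun s => ∫ t in μ y..μ s, w (t, s)) (w (μ y, y) * μ') y := by
    have hsum := hA.add hB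
    rw [add_zero] at hsum
    refine hsum.congr_of_eventuallyEq (Eventually.of_forall fun s => ?_)
    show (∫ t in μ y..μ s, w (t, s)) = (∫ t in μ y..μ s, w (t, y)) + ∫ t in μ y..μ s, (w (t, s) - w (t, y))
    rw [← intervalIntegral.integral_add (hint _ _ _)
      ((hint _ _ s).sub (hint _ _ y))]
    congr 1
    funext t
    ring
  have := P1.sub P2
  refine this.congr_of_eventuallyEq (Eventually.of_forall fun s => ?_)
  exact (intervalIntegral.integral_interval_sub_left (hint _ _ _) (hint _ _ _)).symm

/-- The planar Laplacian of `u : ℝ² → ℝ`: `Δu = ∂²u/∂x² + ∂²u/∂y²`. -/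
noncomputable def planarLaplacian (u : ℝ × ℝ → ℝ) (p : ℝ × ℝ) : ℝ :=
  deriv (fun t => deriv (fun s => u (s, p.2)) t) p.1 +
  deriv (fun t => deriv (fun s => u (p.1, s)) t) p.2

/-- If `v` is `C²` with `Δv + 4v = 0` on `ℝ²`, and `μ` is `C¹` on `(a,b)` with
`v(μ(y), y) = 0`, then `u(x,y) = ∫_{μ(y)}^x v(t,y) dt` satisfies
`Δu + 4u + h(y) = 0` for `h(y) = v_y(μ(y),y)·μ′(y) − v_x(μ(y),y)`. -/
theorem antiderivative_solves_affine_equation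
    (v : ℝ × ℝ → ℝ) (hv : ContDiff ℝ 2 v)
    (hveq : ∀ p : ℝ × ℝ, planarLaplacian v p + 4 * v p = 0)
    (a b : ℝ) (μ : ℝ → ℝ) (hμ : ContDiffOn ℝ 1 μ (Set.Ioo a b))
    (hvμ : ∀ y ∈ Set.Ioo a b, v (μ y, y) = 0)
    (u : ℝ × ℝ → ℝ) (hu : u = fun p => ∫ t in (μ p.2)..p.1, v (t, p.2))
    (h : ℝ → ℝ)
    (hh : h = fun y =>
      deriv (fun s => v (μ y, s)) y * deriv μ y - deriv (fun t => v (t, y)) (μ y)) :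
    ∀ x : ℝ, ∀ y ∈ Set.Ioo a b,
      planarLaplacian u (x, y) + 4 * u (x, y) + h y = 0 := by
  
  intro x y hy
  have hvc : Continuous v := hv.continuous
  have hvd : Differentiable ℝ v := hv.differentiable two_ne_zero
  have hvf : ContDiff ℝ 1 (fderiv ℝ v) := hv.fderiv_right (by norm_num)
  have hv1 : ContDiff ℝ 1 fun p : ℝ × ℝ => fderiv ℝ v p (1, 0) :=
    hvf.clm_apply contDiff_const
  have hv2 : ContDiff ℝ 1 fun p : ℝ × ℝ => fderiv ℝ v p (0, 1) :=
    hvf.clm_apply contDiff_const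
  have v₁d : Differentiable ℝ fun p : ℝ × ℝ => fderiv ℝ v p (1, 0) :=
    hv1.differentiable one_ne_zero
  have v₂d : Differentiable ℝ fun p : ℝ × ℝ => fderiv ℝ v p (0, 1) :=
    hv2.differentiable one_ne_zero
  set v₁ : ℝ × ℝ → ℝ := fun p => fderiv ℝ v p (1, 0) with hv₁def
  set v₂ : ℝ × ℝ → ℝ := fun p => fderiv ℝ v p (0, 1) with hv₂def
  -- the PDE in terms of iterated partials
  have pde : ∀ p : ℝ × ℝ, fderiv ℝ v₂ p (0, 1) = -(fderiv ℝ v₁ p (1, 0)) - 4 * v p := by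
    intro p
    have h0 := hveq p
    rw [planarLaplacian] at h0
    have e1 : (fun t => deriv (fun s => v (s, p.2)) t) = fun t => v₁ (t, p.2) := by
      funext t; exact (pd_fst hvd t p.2).deriv
    have e2 : (fun t => deriv (fun s => v (p.1, s)) t) = fun t => v₂ (p.1, t) := by
      funext t; exact (pd_snd hvd p.1 t).deriv
    rw [e1, e2] at h0
    rw [(pd_fst v₁d p.1 p.2).deriv, (pd_snd v₂d p.1 p.2).deriv] at h0
    linarith
  -- derivative of μ
  have hμ' : ∀ t ∈ Set.Ioo a b, HasDerivAt μ (deriv μ t) t := fun t ht =>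
    (((hμ.differentiableOn one_ne_zero).differentiableAt
      (isOpen_Ioo.mem_nhds ht))).hasDerivAt
  -- x-part
  have hx1 : ∀ t : ℝ, HasDerivAt (fun s => u (s, y)) (v (t, y)) t := by
    intro t
    have e : (fun s => u (s, y)) = fun s => ∫ r in μ y..s, v (r, y) := by
      funext s; simp only [hu]
    rw [e]
    exact intervalIntegral.integral_hasDerivAt_right
      ((cont_slice hvc y).intervalIntegrable _ _)
      ((cont_slice hvc y).stronglyMeasurableAtFilter _ _)
      (cont_slice hvc y).continuousAt
  have exx : deriv (fun t => deriv (fun s => u (s, y)) t) x = v₁ (x, y) := by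
    have e : (fun t => deriv (fun s => u (s, y)) t) = fun t => v (t, y) :=
      funext fun t => (hx1 t).deriv
    rw [e]; exact (pd_fst hvd x y).deriv
  -- y-part
  have hy1 : ∀ t ∈ Set.Ioo a b,
      deriv (fun s => u (x, s)) t = ∫ r in μ t..x, v₂ (r, t) := by
    intro t ht
    have k := key (hv.of_le one_le_two) x t (deriv μ t) (hμ' t ht)
    rw [hvμ t ht, zero_mul, sub_zero] at k
    have e : (fun s => u (x, s)) = fun s => ∫ r in μ s..x, v (r, s) := by
      funext s; simp only [hu]
    rw [e]
    exact k.deriv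
  have eyy : deriv (fun t => deriv (fun s => u (x, s)) t) y
      = (∫ r in μ y..x, fderiv ℝ v₂ (r, y) (0, 1)) - v₂ (μ y, y) * deriv μ y := by
    have heq : (fun t => deriv (fun s => u (x, s)) t)
        =ᶠ[nhds y] fun t => ∫ r in μ t..x, v₂ (r, t) :=
      Filter.eventuallyEq_of_mem (isOpen_Ioo.mem_nhds hy) fun t ht => hy1 t ht
    rw [heq.deriv_eq]
    exact (key hv2 x y (deriv μ y) (hμ' y hy)).deriv
  -- FTC for v₁
  have ftc : (∫ r in μ y..x, fderiv ℝ v₁ (r, y) (1, 0)) = v₁ (x, y) - v₁ (μ y, y) :=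
    intervalIntegral.integral_eq_sub_of_hasDerivAt
      (fun r _ => pd_fst v₁d r y)
      ((cont_slice (cont_pd hv1 (1, 0)) y).intervalIntegrable _ _)
  have huxy : u (x, y) = ∫ r in μ y..x, v (r, y) := by simp only [hu]
  have hintv2 : (∫ r in μ y..x, fderiv ℝ v₂ (r, y) (0, 1))
      = -(v₁ (x, y) - v₁ (μ y, y)) - 4 * u (x, y) := by
    have e : (fun r => fderiv ℝ v₂ (r, y) (0, 1))
        = fun r => -(fderiv ℝ v₁ (r, y) (1, 0)) - 4 * v (r, y) :=
      funext fun r => pde (r, y)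
    rw [e, intervalIntegral.integral_sub (f := fun r => -(fderiv ℝ v₁ (r, y) (1, 0))) (g := fun r => 4 * v (r, y))
        ((cont_slice (cont_pd hv1 (1, 0)) y).neg.intervalIntegrable _ _)
        ((continuous_const.mul (cont_slice hvc y)).intervalIntegrable _ _),
      intervalIntegral.integral_neg, ftc, huxy]
    rw [intervalIntegral.integral_const_mul]
  have hhy : h y = v₂ (μ y, y) * deriv μ y - v₁ (μ y, y) := by
    simp only [hh]
    rw [(pd_snd hvd (μ y) y).deriv, (pd_fst hvd (μ y) y).deriv]
  have lap : planarLaplacian u (x, y)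
      = deriv (fun t => deriv (fun s => u (s, y)) t) x
      + deriv (fun t => deriv (fun s => u (x, s)) t) y := rfl
  rw [lap, exx, eyy, hintv2, hhy]
  ring
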